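/- Let d ≥ 2 and k ≥ 2 with k = ds + b, 0 ≤ b ≤ d−1, and let ℓ_1, ..., ℓ_d be nonnegative integers summing to k with each ℓ_i ∈ {s, s+1}. Then for all nonnegative reals x_1, ..., x_d: (∑_{i=1}^d x_i)^k − ∑_{i=1}^d x_i^k ≥ ((d^k − d)/d!) · ∑_{π ∈ S_d} ∏_{j=1}^d x_j^{ℓ_{π(j)}}. -/

import Mathlib

open Finset

/-- symmetrized power sum -/
noncomputable def Fsym {d : ℕ} (x : Fin d → ℝ) (g : Fin d → ℕ) : ℝ :=
  ∑ π : Equiv.Perm (Fin d), ∏ j, x j ^ g (π j)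

lemma Fsym_comp {d : ℕ} (x : Fin d → ℝ) (g : Fin d → ℕ) (σ : Equiv.Perm (Fin d)) :
    Fsym x (g ∘ σ) = Fsym x g := by
  unfold Fsym
  exact Fintype.sum_equiv (Equiv.mulLeft σ) _ _ (fun π => rfl)

lemma Fsym_alt {d : ℕ} (x : Fin d → ℝ) (g : Fin d → ℕ) :
    Fsym x g = ∑ τ : Equiv.Perm (Fin d), ∏ i, x (τ i) ^ g i := by
  unfold Fsym
  refine Fintype.sum_equiv (Equiv.inv _) _ _ (fun π => ?_)
  rw [← Equiv.prod_comp π (fun i => x ((Equiv.inv _ π : Equiv.Perm (Fin d)) i) ^ g i)]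
  refine Finset.prod_congr rfl (fun j _ => ?_)
  simp

lemma two_var (X Y : ℝ) (hX : 0 ≤ X) (hY : 0 ≤ Y) (u v : ℕ) (h : v + 2 ≤ u) :
    X ^ (u - 1) * Y ^ (v + 1) + X ^ (v + 1) * Y ^ (u - 1) ≤ X ^ u * Y ^ v + X ^ v * Y ^ u := by
  obtain ⟨a, ha, rfl⟩ : ∃ a, 1 ≤ a ∧ u = v + 1 + a := ⟨u - v - 1, by omega, by omega⟩
  have h1 : v + 1 + a - 1 = v + a := by omega
  rw [h1]
  have key : 0 ≤ (X - Y) * (X ^ a - Y ^ a) := by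
    rcases le_total X Y with hxy | hxy
    · have h1 : X - Y ≤ 0 := by linarith
      have h2 : X ^ a - Y ^ a ≤ 0 := by
        have := pow_le_pow_left₀ hX hxy a; linarith
      nlinarith [h1, h2]
    · exact mul_nonneg (by linarith) (by
        have := pow_le_pow_left₀ hY hxy a; linarith)
  have key2 : 0 ≤ X ^ v * Y ^ v * ((X - Y) * (X ^ a - Y ^ a)) :=
    mul_nonneg (mul_nonneg (pow_nonneg hX v) (pow_nonneg hY v)) key
  have e1 : X ^ (v + a) = X ^ v * X ^ a := pow_add X v a
  have e2 : Y ^ (v + a) = Y ^ v * Y ^ a := pow_add Y v a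
  have e3 : X ^ (v + 1) = X ^ v * X := pow_succ X v
  have e4 : Y ^ (v + 1) = Y ^ v * Y := pow_succ Y v
  have e5 : X ^ (v + 1 + a) = X ^ v * X * X ^ a := by rw [pow_add, pow_succ]
  have e6 : Y ^ (v + 1 + a) = Y ^ v * Y * Y ^ a := by rw [pow_add, pow_succ]
  rw [e1, e2, e3, e4, e5, e6]
  nlinarith [key2]

lemma transfer {d : ℕ} (x : Fin d → ℝ) (hx : ∀ i, 0 ≤ x i) (m : Fin d → ℕ)
    (a b : Fin d) (hab : a ≠ b) (hgap : m b + 2 ≤ m a) :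
    Fsym x (Function.update (Function.update m a (m a - 1)) b (m b + 1)) ≤ Fsym x m := by
  classical
  set m' := Function.update (Function.update m a (m a - 1)) b (m b + 1) with hm'
  have hm'a : m' a = m a - 1 := by
    rw [hm', Function.update_of_ne hab, Function.update_self]
  have hm'b : m' b = m b + 1 := by rw [hm', Function.update_self]
  have hm'i : ∀ i, i ≠ a → i ≠ b → m' i = m i := fun i hia hib => by
    rw [hm', Function.update_of_ne hib, Function.update_of_ne hia]
  rw [Fsym_alt, Fsym_alt]
  -- pairing via right multiplication by swap a b
  set t : (Fin d → ℕ) → Equiv.Perm (Fin d) → ℝ := fun g τ => ∏ i, x (τ i) ^ g i with ht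
  have hswap : ∀ g : Fin d → ℕ, ∑ τ : Equiv.Perm (Fin d), t g τ
      = ∑ τ : Equiv.Perm (Fin d), t g (τ * Equiv.swap a b) := by
    intro g
    exact (Fintype.sum_equiv (Equiv.mulRight (Equiv.swap a b)) _ _ (fun τ => rfl)).symm
  have key : ∀ τ : Equiv.Perm (Fin d),
      t m' τ + t m' (τ * Equiv.swap a b) ≤ t m τ + t m (τ * Equiv.swap a b) := by
    intro τ
    have hbmem : b ∈ (univ : Finset (Fin d)).erase a :=
      Finset.mem_erase.mpr ⟨Ne.symm hab, mem_univ b⟩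
    have split : ∀ (g : Fin d → ℕ) (ρ : Equiv.Perm (Fin d)),
        t g ρ = x (ρ a) ^ g a * (x (ρ b) ^ g b *
          ∏ i ∈ ((univ : Finset (Fin d)).erase a).erase b, x (ρ i) ^ g i) := by
      intro g ρ
      rw [ht]
      simp only
      rw [← Finset.mul_prod_erase univ _ (mem_univ a), ← Finset.mul_prod_erase _ _ hbmem]
    have hsw : ∀ i ∈ ((univ : Finset (Fin d)).erase a).erase b,
        (τ * Equiv.swap a b) i = τ i := by
      intro i hi
      simp only [Finset.mem_erase] at hi
      simp [Equiv.Perm.mul_apply, Equiv.swap_apply_of_ne_of_ne hi.2.1 hi.1]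
    have hCeq : ∀ g : Fin d → ℕ,
        ∏ i ∈ ((univ : Finset (Fin d)).erase a).erase b, x ((τ * Equiv.swap a b) i) ^ g i
        = ∏ i ∈ ((univ : Finset (Fin d)).erase a).erase b, x (τ i) ^ g i :=
      fun g => Finset.prod_congr rfl (fun i hi => by rw [hsw i hi])
    set C := ∏ i ∈ ((univ : Finset (Fin d)).erase a).erase b, x (τ i) ^ m i with hC
    have hC' : ∏ i ∈ ((univ : Finset (Fin d)).erase a).erase b, x (τ i) ^ m' i = C := by
      refine Finset.prod_congr rfl (fun i hi => ?_)
      simp only [Finset.mem_erase] at hi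
      rw [hm'i i hi.2.1 hi.1]
    have hCnn : 0 ≤ C := Finset.prod_nonneg (fun i _ => pow_nonneg (hx _) _)
    have hsa : (τ * Equiv.swap a b) a = τ b := by simp
    have hsb : (τ * Equiv.swap a b) b = τ a := by simp
    rw [split m τ, split m (τ * Equiv.swap a b), split m' τ, split m' (τ * Equiv.swap a b),
      hCeq m, hCeq m', hC', hsa, hsb, hm'a, hm'b]
    rw [← hC]
    set X := x (τ a); set Y := x (τ b)
    have h2v := two_var X Y (hx _) (hx _) (m a) (m b) hgap
    have := mul_le_mul_of_nonneg_right h2v hCnn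
    ring_nf
    ring_nf at this
    linarith
  have sum_le : ∑ τ : Equiv.Perm (Fin d), (t m' τ + t m' (τ * Equiv.swap a b))
      ≤ ∑ τ : Equiv.Perm (Fin d), (t m τ + t m (τ * Equiv.swap a b)) :=
    Finset.sum_le_sum (fun τ _ => key τ)
  rw [Finset.sum_add_distrib, Finset.sum_add_distrib, ← hswap, ← hswap] at sum_le
  linarith

lemma balanced_perm {d s bb : ℕ} (m ℓ : Fin d → ℕ)
    (hm : ∀ i, m i = s ∨ m i = s + 1) (hl : ∀ i, ℓ i = s ∨ ℓ i = s + 1)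
    (hsum : ∑ i, m i = ∑ i, ℓ i) :
    ∃ σ : Equiv.Perm (Fin d), m = ℓ ∘ σ := by
  classical
  set p : Fin d → Prop := fun i => m i = s + 1 with hp
  set q : Fin d → Prop := fun i => ℓ i = s + 1 with hq
  have hmval : ∀ i, m i = s + (if p i then 1 else 0) := by
    intro i; rcases hm i with h | h <;> simp [hp, h]
  have hlval : ∀ i, ℓ i = s + (if q i then 1 else 0) := by
    intro i; rcases hl i with h | h <;> simp [hq, h]
  have hcard : Fintype.card {i // p i} = Fintype.card {i // q i} := by
    rw [Fintype.card_subtype, Fintype.card_subtype]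
    have h1 : ∑ i, m i = d * s + (univ.filter (fun x => p x)).card := by
      rw [Finset.sum_congr rfl (fun i _ => hmval i), Finset.sum_add_distrib]
      simp [Finset.sum_boole, mul_comm]
      convert (Finset.card_filter _ _).symm
    have h2 : ∑ i, ℓ i = d * s + (univ.filter (fun x => q x)).card := by
      rw [Finset.sum_congr rfl (fun i _ => hlval i), Finset.sum_add_distrib]
      simp [Finset.sum_boole, mul_comm]
      convert (Finset.card_filter _ _).symm
    omega
  have hcard' : Fintype.card {i // ¬ p i} = Fintype.card {i // ¬ q i} := by
    rw [Fintype.card_subtype_compl, Fintype.card_subtype_compl, hcard]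
  let e : {i // p i} ≃ {i // q i} := Fintype.equivOfCardEq hcard
  let f : {i // ¬ p i} ≃ {i // ¬ q i} := Fintype.equivOfCardEq hcard'
  refine ⟨Equiv.subtypeCongr e f, ?_⟩
  funext i
  simp only [Function.comp_apply]
  by_cases h : p i
  · have : q (Equiv.subtypeCongr e f i) := by
      simp only [Equiv.subtypeCongr, Equiv.trans_apply, Equiv.sumCompl_symm_apply_of_pos h,
        Equiv.sumCongr_apply, Sum.map_inl, Equiv.sumCompl_apply_inl]
      exact (e ⟨i, h⟩).2
    rw [h, this]
  · have : ¬ q (Equiv.subtypeCongr e f i) := by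
      simp only [Equiv.subtypeCongr, Equiv.trans_apply, Equiv.sumCompl_symm_apply_of_neg h,
        Equiv.sumCongr_apply, Sum.map_inr, Equiv.sumCompl_apply_inr]
      exact (f ⟨i, h⟩).2
    rcases hm i with h1 | h1; swap; · exact absurd h1 h
    rcases hl (Equiv.subtypeCongr e f i) with h2 | h2; swap; · exact absurd h2 this
    rw [h1, h2]

lemma muirhead {d k s bb : ℕ} (hd : 2 ≤ d) (hb : bb ≤ d - 1) (hks : k = d * s + bb)
    (ℓ : Fin d → ℕ) (hℓsum : ∑ i, ℓ i = k) (hℓ : ∀ i, ℓ i = s ∨ ℓ i = s + 1)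
    (x : Fin d → ℝ) (hx : ∀ i, 0 ≤ x i) :
    ∀ N, ∀ m : Fin d → ℕ, (∑ i, (m i) ^ 2) = N → (∑ i, m i = k) → Fsym x ℓ ≤ Fsym x m := by
  classical
  intro N
  induction N using Nat.strong_induction_on with
  | _ N ih =>
    intro m hN hsum
    by_cases hgap : ∃ a b, m b + 2 ≤ m a
    · obtain ⟨a, b, hg⟩ := hgap
      have hab : a ≠ b := by intro h; rw [h] at hg; omega
      set m' := Function.update (Function.update m a (m a - 1)) b (m b + 1) with hm'
      have hm'a : m' a = m a - 1 := by
        rw [hm', Function.update_of_ne hab, Function.update_self]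
      have hm'b : m' b = m b + 1 := by rw [hm', Function.update_self]
      have hm'i : ∀ i, i ≠ a → i ≠ b → m' i = m i := fun i hia hib => by
        rw [hm', Function.update_of_ne hib, Function.update_of_ne hia]
      have hamem : a ∈ ((univ : Finset (Fin d)).erase b) :=
        Finset.mem_erase.mpr ⟨hab, mem_univ a⟩
      have hrest : ∀ g : Fin d → ℕ, ∑ i, g i
          = g b + (g a + ∑ i ∈ ((univ : Finset (Fin d)).erase b).erase a, g i) := by
        intro g
        rw [← Finset.add_sum_erase univ g (mem_univ b), ← Finset.add_sum_erase _ g hamem]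
      have hRix : ∀ g1 g2 : Fin d → ℕ, (∀ i, i ≠ a → i ≠ b → g1 i = g2 i) →
          ∑ i ∈ ((univ : Finset (Fin d)).erase b).erase a, g1 i
          = ∑ i ∈ ((univ : Finset (Fin d)).erase b).erase a, g2 i := by
        intro g1 g2 h
        refine Finset.sum_congr rfl (fun i hi => ?_)
        simp only [Finset.mem_erase] at hi
        exact h i hi.1 hi.2.1
      have hrest2 : ∀ g : Fin d → ℕ, ∑ i, (g i) ^ 2
          = (g b) ^ 2 + ((g a) ^ 2 + ∑ i ∈ ((univ : Finset (Fin d)).erase b).erase a, (g i) ^ 2) :=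
        fun g => hrest (fun i => (g i) ^ 2)
      have hRagree : ∑ i ∈ ((univ : Finset (Fin d)).erase b).erase a, m' i
          = ∑ i ∈ ((univ : Finset (Fin d)).erase b).erase a, m i := hRix m' m hm'i
      have hRagree2 : ∑ i ∈ ((univ : Finset (Fin d)).erase b).erase a, (m' i) ^ 2
          = ∑ i ∈ ((univ : Finset (Fin d)).erase b).erase a, (m i) ^ 2 :=
        hRix (fun i => (m' i)^2) (fun i => (m i)^2) (fun i h1 h2 => by rw [hm'i i h1 h2])
      have hsum' : ∑ i, m' i = k := by
        have h1 := hrest m'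
        have h2 := hrest m
        rw [hm'a, hm'b, hRagree] at h1
        omega
      have hmeas : ∑ i, (m' i) ^ 2 < N := by
        have h1 := hrest2 m'
        have h2 := hrest2 m
        rw [hm'a, hm'b, hRagree2] at h1
        have e1 : (m b + 1) ^ 2 = m b ^ 2 + 2 * m b + 1 := by ring
        have e2 : (m a - 1) ^ 2 + 2 * (m a - 1) + 1 = m a ^ 2 := by
          have : m a - 1 + 1 = m a := by omega
          nlinarith [this]
        omega
      exact le_trans (ih _ hmeas m' rfl hsum') (transfer x hx m a b hab hg)
    · push_neg at hgap
      have hgap' : ∀ a b : Fin d, m a ≤ m b + 1 := fun a b => by have := hgap a b; omega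
      have hsplit : ∀ j : Fin d, k = m j + ∑ i ∈ (univ : Finset (Fin d)).erase j, m i := by
        intro j
        rw [← hsum, Finset.add_sum_erase univ m (mem_univ j)]
      have hcarde : ∀ j : Fin d, ((univ : Finset (Fin d)).erase j).card = d - 1 := by
        intro j; rw [Finset.card_erase_of_mem (mem_univ j)]; simp
      have hlow : ∀ j, s ≤ m j := by
        intro j
        by_contra hc
        push_neg at hc
        have hle : ∑ i ∈ (univ : Finset (Fin d)).erase j, m i ≤ (d - 1) * (m j + 1) := by
          calc ∑ i ∈ (univ : Finset (Fin d)).erase j, m i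
              ≤ ((univ : Finset (Fin d)).erase j).card • (m j + 1) :=
                Finset.sum_le_card_nsmul _ _ _ (fun i _ => hgap' i j)
            _ = (d - 1) * (m j + 1) := by rw [hcarde j, smul_eq_mul]
        have hmul : (d - 1) * (m j + 1) ≤ (d - 1) * s := Nat.mul_le_mul_left _ (by omega)
        have hds : (d - 1) * s + s = d * s := by
          have h1 : (d - 1) * s = d * s - s := by rw [Nat.sub_one_mul]
          have h2 : s ≤ d * s := Nat.le_mul_of_pos_left s (by omega)
          omega
        have := hsplit j
        omega
      have hhigh : ∀ j, m j ≤ s + 1 := by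
        intro j
        by_contra hc
        push_neg at hc
        have hge : (d - 1) * (s + 1) ≤ ∑ i ∈ (univ : Finset (Fin d)).erase j, m i := by
          calc (d - 1) * (s + 1) = ((univ : Finset (Fin d)).erase j).card • (s + 1) := by
                rw [hcarde j, smul_eq_mul]
            _ ≤ ∑ i ∈ (univ : Finset (Fin d)).erase j, m i :=
                Finset.card_nsmul_le_sum _ _ _ (fun i _ => by have := hgap' j i; omega)
        have hds : (d - 1) * (s + 1) + (s + 1) = d * s + d := by
          have h1 : (d - 1) * (s + 1) = d * (s + 1) - (s + 1) := by rw [Nat.sub_one_mul]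
          have h2 : s + 1 ≤ d * (s + 1) := Nat.le_mul_of_pos_left _ (by omega)
          have h3 : d * (s + 1) = d * s + d := by ring
          omega
        have := hsplit j
        omega
      have hm : ∀ i, m i = s ∨ m i = s + 1 := fun i => by
        have := hlow i; have := hhigh i; omega
      obtain ⟨σ, hσ⟩ := balanced_perm (s := s) (bb := bb) m ℓ hm hℓ (by rw [hsum, hℓsum])
      rw [hσ, Fsym_comp]

theorem stmt_5 (d k s b : ℕ) (hd : 2 ≤ d) (hk : 2 ≤ k) (hb : b ≤ d - 1)
    (hks : k = d * s + b) (ℓ : Fin d → ℕ) (hℓsum : ∑ i, ℓ i = k)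
    (hℓ : ∀ i, ℓ i = s ∨ ℓ i = s + 1)
    (x : Fin d → ℝ) (hx : ∀ i, 0 ≤ x i) :
    (∑ i, x i) ^ k - ∑ i, x i ^ k ≥
      (((d : ℝ) ^ k - d) / (Nat.factorial d : ℝ))
        * ∑ π : Equiv.Perm (Fin d), ∏ j, x j ^ ℓ (π j) := by
  classical
  have hk0 : 0 < k := by omega
  set z : Fin k := ⟨0, hk0⟩ with hz
  set mcount : (Fin k → Fin d) → Fin d → ℕ :=
    fun f i => ((univ : Finset (Fin k)).filter (fun t => f t = i)).card with hmc
  have hmcsum : ∀ f : Fin k → Fin d, ∑ i, mcount f i = k := by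
    intro f
    rw [hmc]
    rw [← Finset.card_eq_sum_card_fiberwise (fun t _ => mem_univ (f t))]
    simp
  -- expansion
  have hexp : (∑ i, x i) ^ k = ∑ f : Fin k → Fin d, ∏ i, x i ^ mcount f i := by
    rw [Finset.sum_pow' univ x k]
    rw [Fintype.piFinset_univ]
    refine Finset.sum_congr rfl (fun f _ => ?_)
    rw [← Finset.prod_fiberwise_of_maps_to (fun t _ => mem_univ (f t)) (fun t => x (f t))]
    refine Finset.prod_congr rfl (fun i _ => ?_)
    rw [Finset.prod_congr rfl (fun t ht => by rw [(Finset.mem_filter.mp ht).2]),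
      Finset.prod_const]
  set Pc : (Fin k → Fin d) → Prop := fun f => ∀ t, f t = f z with hPc
  set Cs : Finset (Fin k → Fin d) := univ.filter Pc with hCs
  set NC : Finset (Fin k → Fin d) := univ.filter (fun f => ¬ Pc f) with hNC
  -- constant part
  have hconst : ∑ f ∈ Cs, ∏ i, x i ^ mcount f i = ∑ c, x c ^ k := by
    refine Finset.sum_nbij' (fun f => f z) (fun c => fun _ => c) ?_ ?_ ?_ ?_ ?_
    · intro f _; exact mem_univ _
    · intro c _; simp [hCs, hPc]
    · intro f hf
      funext t
      simp only [hCs, hPc, Finset.mem_filter] at hf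
      exact (hf.2 t).symm
    · intro c _; rfl
    · intro f hf
      simp only [hCs, hPc, Finset.mem_filter] at hf
      have hcount : mcount f (f z) = k := by
        rw [hmc]
        simp only
        rw [Finset.filter_true_of_mem (fun t _ => hf.2 t), Finset.card_univ,
          Fintype.card_fin]
      rw [Finset.prod_eq_single (f z) (fun i _ hi => ?_) (fun h => absurd (mem_univ _) h)]
      · rw [hcount]
      · have : mcount f i = 0 := by
          rw [hmc]
          simp only
          rw [Finset.card_eq_zero, Finset.filter_eq_empty_iff]
          intro t _
          rw [hf.2 t]
          exact fun h => hi (h ▸ rfl)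
        rw [this, pow_zero]
  have hCscard : Cs.card = d := by
    have h : Cs.card = (univ : Finset (Fin d)).card := by
      refine Finset.card_bij' (fun f _ => f z) (fun c _ => fun _ => c) ?_ ?_ ?_ ?_
      · intro f _; exact mem_univ _
      · intro c _; simp [hCs, hPc]
      · intro f hf
        funext t
        simp only [hCs, hPc, Finset.mem_filter] at hf
        exact (hf.2 t).symm
      · intro c _; rfl
    rw [h, Finset.card_univ, Fintype.card_fin]
  have hNCcard : NC.card = d ^ k - d := by
    have h1 : Cs.card + NC.card = d ^ k := by
      rw [hCs, hNC, Finset.card_filter_add_card_filter_not, Finset.card_univ]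
      simp [Fintype.card_fun]
    omega
  -- split
  have hsplit : (∑ i, x i) ^ k - ∑ i, x i ^ k = ∑ f ∈ NC, ∏ i, x i ^ mcount f i := by
    rw [hexp, ← Finset.sum_filter_add_sum_filter_not univ Pc (fun f => ∏ i, x i ^ mcount f i)]
    rw [← hCs, ← hNC, hconst]
    ring
  -- symmetrization
  have hsymm : (d.factorial : ℝ) * ∑ f ∈ NC, ∏ i, x i ^ mcount f i
      = ∑ f ∈ NC, Fsym x (mcount f) := by
    unfold Fsym
    rw [Finset.sum_comm]
    have hinner : ∀ σ : Equiv.Perm (Fin d),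
        ∑ f ∈ NC, ∏ i, x i ^ mcount f (σ i) = ∑ f ∈ NC, ∏ i, x i ^ mcount f i := by
      intro σ
      refine Finset.sum_nbij' (fun f => ⇑σ⁻¹ ∘ f) (fun g => ⇑σ ∘ g) ?_ ?_ ?_ ?_ ?_
      · intro f hf
        simp only [hNC, hPc, Finset.mem_filter] at hf ⊢
        refine ⟨mem_univ _, fun hc => hf.2 (fun t => ?_)⟩
        have := hc t
        simp only [Function.comp_apply] at this
        exact σ⁻¹.injective this
      · intro g hg
        simp only [hNC, hPc, Finset.mem_filter] at hg ⊢
        refine ⟨mem_univ _, fun hc => hg.2 (fun t => ?_)⟩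
        have := hc t
        simp only [Function.comp_apply] at this
        exact σ.injective this
      · intro f _; funext t; simp
      · intro g _; funext t; simp
      · intro f hf
        refine Finset.prod_congr rfl (fun i _ => ?_)
        congr 1
        rw [hmc]
        simp only
        congr 1
        refine Finset.filter_congr (fun t _ => ?_)
        simp only [Function.comp_apply]
        constructor
        · intro h; rw [h]; exact σ.symm_apply_apply i
        · intro h; subst h; exact (σ.apply_symm_apply (f t)).symm
    calc (d.factorial : ℝ) * ∑ f ∈ NC, ∏ i, x i ^ mcount f i
        = ∑ _σ : Equiv.Perm (Fin d), ∑ f ∈ NC, ∏ i, x i ^ mcount f i := by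
          rw [Finset.sum_const, Finset.card_univ, Fintype.card_perm, Fintype.card_fin,
            nsmul_eq_mul]
      _ = ∑ σ : Equiv.Perm (Fin d), ∑ f ∈ NC, ∏ i, x i ^ mcount f (σ i) := by
          exact Finset.sum_congr rfl (fun σ _ => (hinner σ).symm)
  -- Muirhead bound
  have hmuir : ∀ f ∈ NC, Fsym x ℓ ≤ Fsym x (mcount f) := by
    intro f _
    exact muirhead hd hb hks ℓ hℓsum hℓ x hx _ (mcount f) rfl (hmcsum f)
  have hbound : (↑(d ^ k - d) : ℝ) * Fsym x ℓ ≤ ∑ f ∈ NC, Fsym x (mcount f) := by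
    calc (↑(d ^ k - d) : ℝ) * Fsym x ℓ = NC.card • Fsym x ℓ := by
          rw [hNCcard, nsmul_eq_mul]
      _ ≤ ∑ f ∈ NC, Fsym x (mcount f) := Finset.card_nsmul_le_sum _ _ _ hmuir
  have hcast : (↑(d ^ k - d) : ℝ) = (d : ℝ) ^ k - d := by
    rw [Nat.cast_sub (Nat.le_self_pow (by omega) d), Nat.cast_pow]
  have hfac : (0 : ℝ) < (d.factorial : ℝ) := by
    exact_mod_cast d.factorial_pos
  rw [ge_iff_le, hsplit, div_mul_eq_mul_div, div_le_iff₀ hfac]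
  have : ((d : ℝ) ^ k - d) * Fsym x ℓ ≤ (d.factorial : ℝ) * ∑ f ∈ NC, ∏ i, x i ^ mcount f i := by
    rw [hsymm, ← hcast]
    exact hbound
  unfold Fsym at this
  linarith
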